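/- Let n ≥ 1 and let f : ℝ^n → ℝ be a smooth, compactly supported function. Then ∫_{ℝ^n} f(x)² |x|² e^{−|x|²/4} dx ≤ 4 ∫_{ℝ^n} ( n·f(x)² + 4·|∇f(x)|² ) e^{−|x|²/4} dx, where dx denotes Lebesgue measure and |∇f| the Euclidean norm of the gradient. -/

import Mathlib

open MeasureTheory
open scoped ContDiff



section
variable {n : ℕ}
local notation "E" => EuclideanSpace ℝ (Fin n)

noncomputable def wgt (n : ℕ) : EuclideanSpace ℝ (Fin n) → ℝ := fun x => Real.exp (-‖x‖ ^ 2 / 4)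

lemma wgt_hasFDerivAt (x : E) :
    HasFDerivAt (wgt n) ((-(wgt n x) / 2) • (innerSL ℝ x : E →L[ℝ] ℝ)) x := by
  have h1 : HasFDerivAt (fun y : E => ‖y‖ ^ 2) (2 • (innerSL ℝ x)) x :=
    (hasStrictFDerivAt_norm_sq x).hasFDerivAt
  have h2 : HasFDerivAt (fun y : E => -‖y‖ ^ 2 / 4) ((-(1/4) : ℝ) • (2 • (innerSL ℝ x))) x := by
    have := h1.const_smul (-(1/4) : ℝ)
    refine this.congr_of_eventuallyEq (Filter.Eventually.of_forall fun y => ?_)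
    show -‖y‖ ^ 2 / 4 = -(1/4) * ‖y‖ ^ 2; ring
  have h3 := h2.exp
  refine h3.congr_fderiv ?_
  ext v
  simp [wgt]
  ring

lemma wgt_contDiff : ContDiff ℝ ∞ (wgt n) := by
  exact (Real.contDiff_exp.comp ((contDiff_norm_sq ℝ).neg.div_const 4)).of_le le_top

noncomputable def Ufld (n : ℕ) (i : Fin n) : EuclideanSpace ℝ (Fin n) → ℝ :=
  fun x => x i * wgt n x

lemma Ufld_differentiable (i : Fin n) : Differentiable ℝ (Ufld n i) :=
  fun x => ((EuclideanSpace.proj i).differentiable.mul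
    (wgt_contDiff.differentiable (by simp))) x

lemma Ufld_fderiv (i : Fin n) (x : E) :
    fderiv ℝ (Ufld n i) x (EuclideanSpace.single i (1:ℝ))
      = (1 - x i ^ 2 / 2) * wgt n x := by
  have hp : HasFDerivAt (fun y : E => y i) (EuclideanSpace.proj i : E →L[ℝ] ℝ) x := by
    have := (EuclideanSpace.proj (𝕜 := ℝ) (ι := Fin n) i).hasFDerivAt (x := x)
    exact this
  have h := hp.mul (wgt_hasFDerivAt x)
  rw [show Ufld n i = (fun y : E => y i) * wgt n from rfl, h.fderiv]
  have h1 : (innerSL ℝ x) (EuclideanSpace.single i (1:ℝ)) = x i := by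
    simp [real_inner_comm, EuclideanSpace.inner_single_right]
  simp [h1]
  ring

lemma clm_eval_eq_sum (L : E →L[ℝ] ℝ) (x : E) :
    L x = ∑ i, x i * L (EuclideanSpace.single i (1:ℝ)) := by
  have hx : x = ∑ i, x i • EuclideanSpace.single i (1:ℝ) := by
    ext j
    have : (∑ i, x i • EuclideanSpace.single i (1:ℝ)) j
        = ∑ i, (x i • EuclideanSpace.single i (1:ℝ)) j := by
      rw [WithLp.ofLp_sum]; exact Finset.sum_apply j Finset.univ _
    rw [this]
    simp [EuclideanSpace.single_apply]
  conv_lhs => rw [hx]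
  rw [map_sum]
  simp [smul_eq_mul]

lemma norm_sq_eq_sum (x : E) : ‖x‖ ^ 2 = ∑ i, x i ^ 2 := by
  rw [← real_inner_self_eq_norm_sq]
  rw [real_inner_self_eq_norm_sq, EuclideanSpace.norm_sq_eq]; simp

end

/-- **Ecker's weighted Sobolev inequality in the flat case** (Proposition 3.13 for a
hyperplane through the origin): for every smooth compactly supported `f : ℝⁿ → ℝ`,
`∫ f² |x|² e^{−|x|²/4} dx ≤ 4 ∫ (n f² + 4 |∇f|²) e^{−|x|²/4} dx`. -/
theorem stmt_12 (n : ℕ) (hn : 1 ≤ n) (f : EuclideanSpace ℝ (Fin n) → ℝ)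
    (hf : ContDiff ℝ ∞ f) (hsupp : HasCompactSupport f) :
    (∫ x : EuclideanSpace ℝ (Fin n), f x ^ 2 * ‖x‖ ^ 2 * Real.exp (-‖x‖ ^ 2 / 4))
      ≤ 4 * ∫ x : EuclideanSpace ℝ (Fin n),
          ((n : ℝ) * f x ^ 2 + 4 * ‖gradient f x‖ ^ 2) * Real.exp (-‖x‖ ^ 2 / 4) := by
  have htop : (1 : WithTop ℕ∞) ≤ ∞ := by exact_mod_cast le_top
  have hfd : Differentiable ℝ f := hf.differentiable (by simp)
  have hfc : Continuous f := hf.continuous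
  have hwc : Continuous (wgt n) := wgt_contDiff.continuous
  have hw0 : ∀ x : (EuclideanSpace ℝ (Fin n)), 0 ≤ wgt n x := fun x => (Real.exp_pos _).le
  have hDc : Continuous (fderiv ℝ f) := hf.continuous_fderiv (by simp)
  -- F = f²
  have hFd : Differentiable ℝ (fun x : EuclideanSpace ℝ (Fin n) => f x ^ 2) := fun x => (hfd x).pow 2
  have hFcd : ContDiff ℝ ∞ (fun x : EuclideanSpace ℝ (Fin n) => f x ^ 2) := hf.pow 2
  have hFc : Continuous (fun x : EuclideanSpace ℝ (Fin n) => f x ^ 2) := hfc.pow 2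
  have hFsupp : HasCompactSupport (fun x : EuclideanSpace ℝ (Fin n) => f x ^ 2) :=
    hsupp.comp_left (g := fun t : ℝ => t ^ 2) (by simp)
  have hFderiv : ∀ (x : (EuclideanSpace ℝ (Fin n))) (v : (EuclideanSpace ℝ (Fin n))), fderiv ℝ (fun y => f y ^ 2) x v = 2 * f x * fderiv ℝ f x v := by
    intro x v
    have h := ((hfd x).hasFDerivAt.mul (hfd x).hasFDerivAt)
    have h2 : (fun y : EuclideanSpace ℝ (Fin n) => f y ^ 2) = fun y => f y * f y := by funext y; ring
    rw [h2, show (fun y => f y * f y) = f * f from rfl, h.fderiv]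
    simp only [ContinuousLinearMap.add_apply, ContinuousLinearMap.smul_apply, smul_eq_mul]
    ring
  have hgrad_norm : ∀ x : (EuclideanSpace ℝ (Fin n)), ‖gradient f x‖ = ‖fderiv ℝ f x‖ := fun x =>
    LinearIsometryEquiv.norm_map _ _
  -- continuity of various integrands
  have hcoord : ∀ i : Fin n, Continuous (fun x : EuclideanSpace ℝ (Fin n) => x i) := fun i =>
    (EuclideanSpace.proj (𝕜 := ℝ) i).continuous
  have hDfx_cont : Continuous (fun x : EuclideanSpace ℝ (Fin n) => fderiv ℝ f x x) := hDc.clm_apply continuous_id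
  have hgrad_cont : Continuous (fun x : EuclideanSpace ℝ (Fin n) => ‖gradient f x‖ ^ 2) := by
    have : (fun x : EuclideanSpace ℝ (Fin n) => ‖gradient f x‖ ^ 2) = fun x => ‖fderiv ℝ f x‖ ^ 2 := by
      funext x; rw [hgrad_norm]
    rw [this]; exact (hDc.norm).pow 2
  -- integrability
  have hA_int : Integrable (fun x : EuclideanSpace ℝ (Fin n) => f x ^ 2 * ‖x‖ ^ 2 * wgt n x) := by
    apply Continuous.integrable_of_hasCompactSupport
    · exact (hFc.mul (continuous_norm.pow 2)).mul hwc
    · exact (hFsupp.mul_right).mul_right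
  have hB_int : Integrable (fun x : EuclideanSpace ℝ (Fin n) => f x ^ 2 * wgt n x) := by
    apply Continuous.integrable_of_hasCompactSupport (hFc.mul hwc) hFsupp.mul_right
  have hC_int : Integrable (fun x : EuclideanSpace ℝ (Fin n) => ‖gradient f x‖ ^ 2 * wgt n x) := by
    apply Continuous.integrable_of_hasCompactSupport (hgrad_cont.mul hwc)
    have hg : HasCompactSupport (fun x : EuclideanSpace ℝ (Fin n) => ‖gradient f x‖ ^ 2) :=
      (hsupp.fderiv ℝ).comp_left (g := fun L : EuclideanSpace ℝ (Fin n) →L[ℝ] ℝ => ‖(InnerProductSpace.toDual ℝ (EuclideanSpace ℝ (Fin n))).symm L‖ ^ 2)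
        (by simp)
    exact hg.mul_right
  have hD_int : Integrable (fun x : EuclideanSpace ℝ (Fin n) => (2 * f x * fderiv ℝ f x x) * wgt n x) := by
    apply Continuous.integrable_of_hasCompactSupport
    · exact ((continuous_const.mul hfc).mul hDfx_cont).mul hwc
    · have h1 : HasCompactSupport (fun x : EuclideanSpace ℝ (Fin n) => 2 * f x) :=
        hsupp.comp_left (g := fun t : ℝ => 2 * t) (by simp)
      exact (h1.mul_right).mul_right
  -- per-coordinate integration by parts
  have IBP : ∀ i : Fin n,
      ∫ x : (EuclideanSpace ℝ (Fin n)), f x ^ 2 * ((1 - x i ^ 2 / 2) * wgt n x)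
        = -∫ x : (EuclideanSpace ℝ (Fin n)), (2 * f x * fderiv ℝ f x (EuclideanSpace.single i (1:ℝ))) * (x i * wgt n x) := by
    intro i
    have int3 : Integrable (fun x : EuclideanSpace ℝ (Fin n) => f x ^ 2 * Ufld n i x) := by
      apply Continuous.integrable_of_hasCompactSupport
      · exact hFc.mul ((hcoord i).mul hwc)
      · exact hFsupp.mul_right
    have int1 : Integrable (fun x : EuclideanSpace ℝ (Fin n) =>
        fderiv ℝ (fun y : EuclideanSpace ℝ (Fin n) => f y ^ 2) x (EuclideanSpace.single i (1:ℝ)) * Ufld n i x) := by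
      apply Continuous.integrable_of_hasCompactSupport
      · exact ((hFcd.continuous_fderiv (by simp)).clm_apply continuous_const).mul ((hcoord i).mul hwc)
      · exact (hFsupp.fderiv_apply ℝ _).mul_right
    have int2 : Integrable (fun x : EuclideanSpace ℝ (Fin n) =>
        f x ^ 2 * fderiv ℝ (Ufld n i) x (EuclideanSpace.single i (1:ℝ))) := by
      have heq : (fun x : EuclideanSpace ℝ (Fin n) => f x ^ 2 * fderiv ℝ (Ufld n i) x (EuclideanSpace.single i (1:ℝ)))
          = fun x : EuclideanSpace ℝ (Fin n) => f x ^ 2 * ((1 - x i ^ 2 / 2) * wgt n x) := by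
        funext x; rw [Ufld_fderiv]
      rw [heq]
      apply Continuous.integrable_of_hasCompactSupport
      · exact hFc.mul ((continuous_const.sub ((hcoord i).pow 2 |>.div_const 2)).mul hwc)
      · exact hFsupp.mul_right
    have h := integral_mul_fderiv_eq_neg_fderiv_mul_of_integrable
      (μ := (volume : Measure (EuclideanSpace ℝ (Fin n)))) int1 int2 int3 (fun x _ => hFd x) (fun x _ => Ufld_differentiable i x)
    calc ∫ x : (EuclideanSpace ℝ (Fin n)), f x ^ 2 * ((1 - x i ^ 2 / 2) * wgt n x)
        = ∫ x : (EuclideanSpace ℝ (Fin n)), f x ^ 2 * fderiv ℝ (Ufld n i) x (EuclideanSpace.single i (1:ℝ)) := by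
          congr 1; funext x; rw [Ufld_fderiv]
      _ = -∫ x : (EuclideanSpace ℝ (Fin n)), fderiv ℝ (fun y : EuclideanSpace ℝ (Fin n) => f y ^ 2) x (EuclideanSpace.single i (1:ℝ)) * Ufld n i x := h
      _ = -∫ x : (EuclideanSpace ℝ (Fin n)), (2 * f x * fderiv ℝ f x (EuclideanSpace.single i (1:ℝ))) * (x i * wgt n x) := by
          have heq2 : (fun x : EuclideanSpace ℝ (Fin n) =>
              fderiv ℝ (fun y => f y ^ 2) x (EuclideanSpace.single i (1:ℝ)) * Ufld n i x)
              = fun x : EuclideanSpace ℝ (Fin n) =>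
                (2 * f x * fderiv ℝ f x (EuclideanSpace.single i (1:ℝ))) * (x i * wgt n x) := by
            funext x; rw [hFderiv]; rfl
          rw [heq2]
  -- integrability of summand families
  have intL : ∀ i : Fin n, Integrable (fun x : EuclideanSpace ℝ (Fin n) =>
      f x ^ 2 * ((1 - x i ^ 2 / 2) * wgt n x)) := by
    intro i
    apply Continuous.integrable_of_hasCompactSupport
    · exact hFc.mul ((continuous_const.sub (((hcoord i).pow 2).div_const 2)).mul hwc)
    · exact hFsupp.mul_right
  have intR : ∀ i : Fin n, Integrable (fun x : EuclideanSpace ℝ (Fin n) =>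
      (2 * f x * fderiv ℝ f x (EuclideanSpace.single i (1:ℝ))) * (x i * wgt n x)) := by
    intro i
    apply Continuous.integrable_of_hasCompactSupport
    · exact ((continuous_const.mul hfc).mul (hDc.clm_apply continuous_const)).mul
        ((hcoord i).mul hwc)
    · have h1 : HasCompactSupport (fun x : EuclideanSpace ℝ (Fin n) => 2 * f x) :=
        hsupp.comp_left (g := fun t : ℝ => 2 * t) (by simp)
      exact (h1.mul_right).mul_right
  -- sum the identities
  have Hid : ∫ x : EuclideanSpace ℝ (Fin n), f x ^ 2 * (((n:ℝ) - ‖x‖ ^ 2 / 2) * wgt n x)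
      = -∫ x : EuclideanSpace ℝ (Fin n), (2 * f x * fderiv ℝ f x x) * wgt n x := by
    have hsum : ∑ i : Fin n, (∫ x : EuclideanSpace ℝ (Fin n),
          f x ^ 2 * ((1 - x i ^ 2 / 2) * wgt n x))
        = ∑ i : Fin n, -(∫ x : EuclideanSpace ℝ (Fin n),
          (2 * f x * fderiv ℝ f x (EuclideanSpace.single i (1:ℝ))) * (x i * wgt n x)) :=
      Finset.sum_congr rfl (fun i _ => IBP i)
    rw [← integral_finset_sum _ (fun i _ => intL i)] at hsum
    rw [Finset.sum_neg_distrib, ← integral_finset_sum _ (fun i _ => intR i)] at hsum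
    have eqL : (fun x : EuclideanSpace ℝ (Fin n) =>
        ∑ i : Fin n, f x ^ 2 * ((1 - x i ^ 2 / 2) * wgt n x))
        = fun x => f x ^ 2 * (((n:ℝ) - ‖x‖ ^ 2 / 2) * wgt n x) := by
      funext x
      rw [norm_sq_eq_sum]
      rw [Finset.sum_congr rfl (fun i (_ : i ∈ Finset.univ) =>
        (by ring : f x ^ 2 * ((1 - x i ^ 2 / 2) * wgt n x)
          = f x ^ 2 * wgt n x - f x ^ 2 * wgt n x / 2 * x i ^ 2))]
      rw [Finset.sum_sub_distrib, Finset.sum_const, ← Finset.mul_sum]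
      simp only [Finset.card_univ, Fintype.card_fin, nsmul_eq_mul]
      ring
    have eqR : (fun x : EuclideanSpace ℝ (Fin n) =>
        ∑ i : Fin n, (2 * f x * fderiv ℝ f x (EuclideanSpace.single i (1:ℝ))) * (x i * wgt n x))
        = fun x => (2 * f x * fderiv ℝ f x x) * wgt n x := by
      funext x
      rw [clm_eval_eq_sum (fderiv ℝ f x) x, Finset.mul_sum, Finset.sum_mul]
      exact Finset.sum_congr rfl (fun i _ => by ring)
    rw [eqL, eqR] at hsum
    exact hsum
  -- rearrange the identity
  have e1 : ∫ x : EuclideanSpace ℝ (Fin n), f x ^ 2 * (((n:ℝ) - ‖x‖ ^ 2 / 2) * wgt n x)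
      = (n:ℝ) * (∫ x : EuclideanSpace ℝ (Fin n), f x ^ 2 * wgt n x)
        - (1/2) * ∫ x : EuclideanSpace ℝ (Fin n), f x ^ 2 * ‖x‖ ^ 2 * wgt n x := by
    have heq : (fun x : EuclideanSpace ℝ (Fin n) => f x ^ 2 * (((n:ℝ) - ‖x‖ ^ 2 / 2) * wgt n x))
        = fun x => (n:ℝ) * (f x ^ 2 * wgt n x) - (1/2) * (f x ^ 2 * ‖x‖ ^ 2 * wgt n x) := by
      funext x; ring
    rw [heq, integral_sub (hB_int.const_mul _) (hA_int.const_mul _), integral_const_mul,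
      integral_const_mul]
  -- Cauchy–Schwarz / AM-GM bound
  have e2 : ∫ x : EuclideanSpace ℝ (Fin n), (2 * f x * fderiv ℝ f x x) * wgt n x
      ≤ (1/4) * (∫ x : EuclideanSpace ℝ (Fin n), f x ^ 2 * ‖x‖ ^ 2 * wgt n x)
        + 4 * ∫ x : EuclideanSpace ℝ (Fin n), ‖gradient f x‖ ^ 2 * wgt n x := by
    have hptw : ∀ x : EuclideanSpace ℝ (Fin n), (2 * f x * fderiv ℝ f x x) * wgt n x
        ≤ (1/4) * (f x ^ 2 * ‖x‖ ^ 2 * wgt n x) + 4 * (‖gradient f x‖ ^ 2 * wgt n x) := by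
      intro x
      have hb' : f x * fderiv ℝ f x x ≤ |f x| * (‖gradient f x‖ * ‖x‖) := by
        calc f x * fderiv ℝ f x x ≤ |f x * fderiv ℝ f x x| := le_abs_self _
          _ = |f x| * |fderiv ℝ f x x| := abs_mul _ _
          _ ≤ |f x| * (‖gradient f x‖ * ‖x‖) := by
              apply mul_le_mul_of_nonneg_left _ (abs_nonneg _)
              rw [hgrad_norm, ← Real.norm_eq_abs]
              exact (fderiv ℝ f x).le_opNorm x
      have h2 : 2 * f x * fderiv ℝ f x x ≤ (1/4) * (f x ^ 2 * ‖x‖ ^ 2) + 4 * ‖gradient f x‖ ^ 2 := by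
        nlinarith [sq_nonneg (|f x| * ‖x‖ / 2 - 2 * ‖gradient f x‖), sq_abs (f x), hb',
          abs_nonneg (f x), norm_nonneg x, norm_nonneg (gradient f x)]
      have h3 := mul_le_mul_of_nonneg_right h2 (hw0 x)
      nlinarith [h3]
    have hmono := integral_mono hD_int ((hA_int.const_mul (1/4:ℝ)).add (hC_int.const_mul 4)) hptw
    calc ∫ x : EuclideanSpace ℝ (Fin n), (2 * f x * fderiv ℝ f x x) * wgt n x
        ≤ ∫ x : EuclideanSpace ℝ (Fin n),
            ((1/4) * (f x ^ 2 * ‖x‖ ^ 2 * wgt n x) + 4 * (‖gradient f x‖ ^ 2 * wgt n x)) := hmono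
      _ = _ := by
          rw [integral_add (hA_int.const_mul _) (hC_int.const_mul _), integral_const_mul,
            integral_const_mul]
  -- final assembly
  have e3 : ∫ x : EuclideanSpace ℝ (Fin n),
        ((n : ℝ) * f x ^ 2 + 4 * ‖gradient f x‖ ^ 2) * wgt n x
      = (n:ℝ) * (∫ x : EuclideanSpace ℝ (Fin n), f x ^ 2 * wgt n x)
        + 4 * ∫ x : EuclideanSpace ℝ (Fin n), ‖gradient f x‖ ^ 2 * wgt n x := by
    have heq : (fun x : EuclideanSpace ℝ (Fin n) =>
        ((n : ℝ) * f x ^ 2 + 4 * ‖gradient f x‖ ^ 2) * wgt n x)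
        = fun x => (n:ℝ) * (f x ^ 2 * wgt n x) + 4 * (‖gradient f x‖ ^ 2 * wgt n x) := by
      funext x; ring
    rw [heq, integral_add (hB_int.const_mul _) (hC_int.const_mul _), integral_const_mul,
      integral_const_mul]
  show (∫ x : EuclideanSpace ℝ (Fin n), f x ^ 2 * ‖x‖ ^ 2 * wgt n x)
      ≤ 4 * ∫ x : EuclideanSpace ℝ (Fin n),
          ((n : ℝ) * f x ^ 2 + 4 * ‖gradient f x‖ ^ 2) * wgt n x
  rw [e3]
  rw [e1] at Hid
  linarith [e2, Hid]
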